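/- Let P_++ denote the set of distributions supported on compact subsets of (0,∞)². Suppose g : (0,∞)² → ℝ is weakly increasing in its first argument and scale-invariant. Then θ_g = E_P[g(Y(1),Y(0))] is point-identified over P_++ if and only if there exist constants c ≥ 0 and d ∈ ℝ such that g(y₁,y₀) = c·(log(y₁) − log(y₀)) + d for all y₁, y₀ > 0. -/

import Mathlib

open MeasureTheory Filter Set

open scoped ENNReal

lemma my_integrable_dirac {f : ℝ × ℝ → ℝ} (p : ℝ × ℝ) : Integrable f (Measure.dirac p) := by
  have h : f =ᵐ[Measure.dirac p] fun _ => f p := by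
    rw [EventuallyEq, ae_dirac_eq]; exact eventually_pure.2 rfl
  exact (integrable_const (f p)).congr h.symm

lemma my_integral_two_point (f : ℝ × ℝ → ℝ) (p q : ℝ × ℝ) :
    ∫ x, f x ∂((2:ℝ≥0∞)⁻¹ • Measure.dirac p + (2:ℝ≥0∞)⁻¹ • Measure.dirac q)
      = (f p + f q) / 2 := by
  rw [integral_add_measure ((my_integrable_dirac p).smul_measure (by simp))
      ((my_integrable_dirac q).smul_measure (by simp)),
    integral_smul_measure, integral_smul_measure, integral_dirac, integral_dirac]
  have h2 : ((2:ℝ≥0∞)⁻¹).toReal = 1/2 := by simp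
  rw [h2]; simp only [smul_eq_mul]; ring

lemma my_prob_two_point (p q : ℝ × ℝ) :
    IsProbabilityMeasure ((2:ℝ≥0∞)⁻¹ • Measure.dirac p + (2:ℝ≥0∞)⁻¹ • Measure.dirac q) := by
  constructor
  simp [ENNReal.inv_two_add_inv_two]

lemma my_map_two_point (φ : ℝ × ℝ → ℝ) (hφ : Measurable φ) (p q : ℝ × ℝ) :
    ((2:ℝ≥0∞)⁻¹ • Measure.dirac p + (2:ℝ≥0∞)⁻¹ • Measure.dirac q).map φ
      = (2:ℝ≥0∞)⁻¹ • Measure.dirac (φ p) + (2:ℝ≥0∞)⁻¹ • Measure.dirac (φ q) := by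
  rw [Measure.map_add _ _ hφ, Measure.map_smul, Measure.map_smul,
    Measure.map_dirac' hφ, Measure.map_dirac' hφ]

lemma my_supp_two_point (p q : ℝ × ℝ) (hp : 0 < p.1 ∧ 0 < p.2) (hq : 0 < q.1 ∧ 0 < q.2) :
    ∃ K : Set (ℝ × ℝ), IsCompact K ∧ K ⊆ {x : ℝ × ℝ | 0 < x.1 ∧ 0 < x.2} ∧
      ((2:ℝ≥0∞)⁻¹ • Measure.dirac p + (2:ℝ≥0∞)⁻¹ • Measure.dirac q) Kᶜ = 0 := by
  refine ⟨{p, q}, (Set.toFinite _).isCompact, ?_, ?_⟩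
  · rintro x (rfl | rfl)
    · exact hp
    · exact hq
  · have h1 : Measure.dirac p ({p, q} : Set (ℝ × ℝ))ᶜ = 0 := by
      rw [Measure.dirac_apply]
      exact Set.indicator_of_notMem (by simp) _
    have h2 : Measure.dirac q ({p, q} : Set (ℝ × ℝ))ᶜ = 0 := by
      rw [Measure.dirac_apply]
      exact Set.indicator_of_notMem (by simp) _
    simp [Measure.add_apply, h1, h2]

lemma my_additive_monotone_linear (f : ℝ → ℝ) (hadd : ∀ x y, f (x + y) = f x + f y)
    (hmono : Monotone f) : ∀ x, f x = f 1 * x := by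
  set φ : ℝ →+ ℝ := AddMonoidHom.mk' f hadd with hφ
  have hrat : ∀ q : ℚ, f (q : ℝ) = (q : ℝ) * f 1 := by
    intro q
    have := map_ratCast_smul φ ℝ ℝ q (1 : ℝ)
    simpa [Rat.smul_def, hφ] using this
  have h0 : f 0 = 0 := by
    have := hadd 0 0; simpa using this.symm
  have h1 : 0 ≤ f 1 := by rw [← h0]; exact hmono (by norm_num)
  intro x
  refine le_antisymm ?_ ?_
  · by_contra hlt
    push_neg at hlt
    rcases eq_or_lt_of_le h1 with h1' | h1'
    · obtain ⟨r, hr⟩ := exists_rat_gt x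
      have hfr : f x ≤ f (r : ℝ) := hmono hr.le
      rw [hrat, ← h1'] at hfr
      have hz : f 1 * x = 0 := by rw [← h1']; ring
      linarith
    · have hx : x < f x / f 1 := (lt_div_iff₀ h1').2 (by linarith)
      obtain ⟨r, hr1, hr2⟩ := exists_rat_btwn hx
      have hfr : f x ≤ f (r : ℝ) := hmono hr1.le
      rw [hrat] at hfr
      have hlt2 : (r : ℝ) * f 1 < f x := (lt_div_iff₀ h1').1 hr2
      linarith
  · by_contra hlt
    push_neg at hlt
    rcases eq_or_lt_of_le h1 with h1' | h1'
    · obtain ⟨r, hr⟩ := exists_rat_lt x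
      have hfr : f (r : ℝ) ≤ f x := hmono hr.le
      rw [hrat, ← h1'] at hfr
      have hz : f 1 * x = 0 := by rw [← h1']; ring
      linarith
    · have hx : f x / f 1 < x := (div_lt_iff₀ h1').2 (by linarith [mul_comm x (f 1)])
      obtain ⟨r, hr1, hr2⟩ := exists_rat_btwn hx
      have hle : f (r : ℝ) ≤ f x := hmono hr2.le
      rw [hrat] at hle
      have hlt2 : f x < (r : ℝ) * f 1 := (div_lt_iff₀ h1').1 hr1
      linarith

/-- Chen–Roth, Proposition A.1: for `g : (0,∞)² → ℝ` weakly increasing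
in its first argument and scale-invariant, `θ_g = E_P[g(Y(1),Y(0))]` is point-identified
over all distributions supported on compact subsets of `(0,∞)²` if and only if
`g(y₁,y₀) = c·(log y₁ − log y₀) + d` for some `c ≥ 0` and `d ∈ ℝ`. -/
theorem stmt_6 (g : ℝ → ℝ → ℝ)
    (hmono : ∀ y0 : ℝ, 0 < y0 → ∀ y1 y1' : ℝ, 0 < y1 → y1 ≤ y1' → g y1 y0 ≤ g y1' y0)
    (hscale : ∀ a y1 y0 : ℝ, 0 < a → 0 < y1 → 0 < y0 → g (a * y1) (a * y0) = g y1 y0) :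
    (∀ P Q : Measure (ℝ × ℝ), IsProbabilityMeasure P → IsProbabilityMeasure Q →
      (∃ K : Set (ℝ × ℝ), IsCompact K ∧ K ⊆ {x : ℝ × ℝ | 0 < x.1 ∧ 0 < x.2} ∧ P Kᶜ = 0) →
      (∃ K : Set (ℝ × ℝ), IsCompact K ∧ K ⊆ {x : ℝ × ℝ | 0 < x.1 ∧ 0 < x.2} ∧ Q Kᶜ = 0) →
      P.map Prod.fst = Q.map Prod.fst →
      P.map Prod.snd = Q.map Prod.snd →
      ∫ x, g x.1 x.2 ∂P = ∫ x, g x.1 x.2 ∂Q)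
    ↔ (∃ c d : ℝ, 0 ≤ c ∧ ∀ y1 y0 : ℝ, 0 < y1 → 0 < y0 →
        g y1 y0 = c * (Real.log y1 - Real.log y0) + d) := by
  constructor
  · intro H
    have rect : ∀ x1 x2 y1 y2 : ℝ, 0 < x1 → 0 < x2 → 0 < y1 → 0 < y2 →
        g x1 y1 + g x2 y2 = g x1 y2 + g x2 y1 := by
      intro x1 x2 y1 y2 hx1 hx2 hy1 hy2
      set P := (2:ℝ≥0∞)⁻¹ • Measure.dirac ((x1, y1) : ℝ × ℝ)
        + (2:ℝ≥0∞)⁻¹ • Measure.dirac ((x2, y2) : ℝ × ℝ) with hPdef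
      set Q := (2:ℝ≥0∞)⁻¹ • Measure.dirac ((x1, y2) : ℝ × ℝ)
        + (2:ℝ≥0∞)⁻¹ • Measure.dirac ((x2, y1) : ℝ × ℝ) with hQdef
      have hmapfst : P.map Prod.fst = Q.map Prod.fst := by
        rw [hPdef, hQdef, my_map_two_point _ measurable_fst, my_map_two_point _ measurable_fst]
      have hmapsnd : P.map Prod.snd = Q.map Prod.snd := by
        rw [hPdef, hQdef, my_map_two_point _ measurable_snd, my_map_two_point _ measurable_snd]
        exact add_comm _ _
      have hint := H P Q (my_prob_two_point _ _) (my_prob_two_point _ _)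
        (my_supp_two_point _ _ ⟨hx1, hy1⟩ ⟨hx2, hy2⟩)
        (my_supp_two_point _ _ ⟨hx1, hy2⟩ ⟨hx2, hy1⟩) hmapfst hmapsnd
      rw [hPdef, hQdef, my_integral_two_point (fun x => g x.1 x.2),
        my_integral_two_point (fun x => g x.1 x.2)] at hint
      simp only at hint
      linarith
    set h : ℝ → ℝ := fun t => g (Real.exp t) 1 with hh
    have hgh : ∀ y1 y0 : ℝ, 0 < y1 → 0 < y0 →
        g y1 y0 = h (Real.log y1 - Real.log y0) := by
      intro y1 y0 h1 h0
      have e1 : Real.exp (Real.log y1 - Real.log y0) = y1 / y0 := by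
        rw [Real.exp_sub, Real.exp_log h1, Real.exp_log h0]
      rw [hh]
      dsimp only
      rw [e1]
      have key := hscale y0 (y1 / y0) 1 h0 (by positivity) one_pos
      have e2 : y0 * (y1 / y0) = y1 := by field_simp
      rw [e2, mul_one] at key
      exact key
    have hmonh : Monotone h := by
      intro s t hst
      exact hmono 1 one_pos _ _ (Real.exp_pos s) (Real.exp_le_exp.2 hst)
    have hcoc : ∀ s t : ℝ, h s + h t = h (s + t) + h 0 := by
      intro s t
      have e := rect (Real.exp (s + t)) (Real.exp t) (Real.exp t) 1
        (Real.exp_pos _) (Real.exp_pos _) (Real.exp_pos _) one_pos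
      have A : g (Real.exp (s + t)) (Real.exp t) = h s := by
        rw [hgh _ _ (Real.exp_pos _) (Real.exp_pos _), Real.log_exp, Real.log_exp]
        congr 1; ring
      have B : g (Real.exp t) 1 = h t := by
        rw [hgh _ _ (Real.exp_pos _) one_pos, Real.log_exp, Real.log_one]
        congr 1; ring
      have C : g (Real.exp (s + t)) 1 = h (s + t) := by
        rw [hgh _ _ (Real.exp_pos _) one_pos, Real.log_exp, Real.log_one]
        congr 1; ring
      have D : g (Real.exp t) (Real.exp t) = h 0 := by
        rw [hgh _ _ (Real.exp_pos _) (Real.exp_pos _), Real.log_exp]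
        congr 1; ring
      rw [A, B, C, D] at e
      exact e
    have hadd : ∀ x y : ℝ, (h (x + y) - h 0) = (h x - h 0) + (h y - h 0) := by
      intro x y
      have := hcoc x y
      linarith
    have hmonf : Monotone (fun t => h t - h 0) := by
      intro a b hab
      exact sub_le_sub_right (hmonh hab) _
    have lin := my_additive_monotone_linear (fun t => h t - h 0) hadd hmonf
    refine ⟨h 1 - h 0, h 0, sub_nonneg.2 (hmonh zero_le_one), ?_⟩
    intro y1 y0 h1 h0p
    rw [hgh _ _ h1 h0p]
    have hl : h (Real.log y1 - Real.log y0) - h 0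
        = (h 1 - h 0) * (Real.log y1 - Real.log y0) := lin (Real.log y1 - Real.log y0)
    linarith
  · rintro ⟨c, d, hc, hgf⟩ P Q hP hQ ⟨K, hKc, hKpos, hPK⟩ ⟨L, hLc, hLpos, hQL⟩ hm1 hm2
    have key : ∀ μ : Measure (ℝ × ℝ), IsProbabilityMeasure μ →
        ∀ K : Set (ℝ × ℝ), IsCompact K → K ⊆ {x : ℝ × ℝ | 0 < x.1 ∧ 0 < x.2} → μ Kᶜ = 0 →
        ∫ x, g x.1 x.2 ∂μ
          = c * (∫ y, Real.log y ∂(μ.map Prod.fst))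
            - c * (∫ y, Real.log y ∂(μ.map Prod.snd)) + d := by
      intro μ hμ K hKc hKpos hμK
      have haeK : ∀ᵐ x ∂μ, x ∈ K := mem_ae_iff.2 hμK
      have hcont1 : ContinuousOn (fun x : ℝ × ℝ => Real.log x.1) K := by
        intro x hx
        exact ((Real.continuousAt_log (ne_of_gt (hKpos hx).1)).comp
          continuous_fst.continuousAt).continuousWithinAt
      have hcont2 : ContinuousOn (fun x : ℝ × ℝ => Real.log x.2) K := by
        intro x hx
        exact ((Real.continuousAt_log (ne_of_gt (hKpos hx).2)).comp
          continuous_snd.continuousAt).continuousWithinAt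
      obtain ⟨C1, hC1⟩ := hKc.exists_bound_of_continuousOn hcont1
      obtain ⟨C2, hC2⟩ := hKc.exists_bound_of_continuousOn hcont2
      have hint1 : Integrable (fun x : ℝ × ℝ => Real.log x.1) μ := by
        refine Integrable.mono' (integrable_const C1)
          ((Real.measurable_log.comp measurable_fst).aestronglyMeasurable) ?_
        filter_upwards [haeK] with x hx using hC1 x hx
      have hint2 : Integrable (fun x : ℝ × ℝ => Real.log x.2) μ := by
        refine Integrable.mono' (integrable_const C2)
          ((Real.measurable_log.comp measurable_snd).aestronglyMeasurable) ?_
        filter_upwards [haeK] with x hx using hC2 x hx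
      have hcongr : (fun x : ℝ × ℝ => g x.1 x.2)
          =ᵐ[μ] fun x => c * (Real.log x.1 - Real.log x.2) + d := by
        filter_upwards [haeK] with x hx
        exact hgf x.1 x.2 (hKpos hx).1 (hKpos hx).2
      have hintA : Integrable (fun x : ℝ × ℝ => c * (Real.log x.1 - Real.log x.2)) μ :=
        (hint1.sub hint2).const_mul c
      rw [integral_congr_ae hcongr,
        integral_add hintA (integrable_const d),
        integral_const_mul, integral_sub hint1 hint2, integral_const,
        ← integral_map measurable_fst.aemeasurable Real.measurable_log.aestronglyMeasurable,
        ← integral_map measurable_snd.aemeasurable Real.measurable_log.aestronglyMeasurable]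
      have hu : μ.real Set.univ = 1 := by simp
      rw [hu]
      simp only [smul_eq_mul]
      ring
    rw [key P hP K hKc hKpos hPK, key Q hQ L hLc hLpos hQL, hm1, hm2]
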